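/- Let c ∼ N(0, I_n) be a standard Gaussian vector in ℝ^n, let α ∈ [0, 2√(log 2)], and choose β ∈ [1/2, 1] satisfying H(β) = α²/4, where H(x) = −x·log x − (1−x)·log(1−x) is the natural-base entropy function. Then P[ max{ c·x : x ∈ {0,1}^n, ‖x‖₁ ≥ βn } ≥ αn ] ≤ e^{−α²n/4}. -/

import Mathlib

open MeasureTheory ProbabilityTheory Real

lemma pdf_mul_exp (t x : ℝ) :
    gaussianPDFReal 0 1 x * Real.exp (t * x) = Real.exp (t ^ 2 / 2) * gaussianPDFReal t 1 x := by
  simp only [gaussianPDFReal, NNReal.coe_one, mul_one, sub_zero]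
  rw [mul_assoc, ← Real.exp_add, mul_comm (Real.exp (t ^ 2 / 2)), mul_assoc, ← Real.exp_add]
  congr 1
  ring_nf

lemma gauss_eq : gaussianReal 0 1
    = MeasureTheory.volume.withDensity (fun x => ((gaussianPDFReal 0 1 x).toNNReal : ENNReal)) :=
  gaussianReal_of_var_ne_zero 0 one_ne_zero

lemma integrable_exp_gaussian (t : ℝ) :
    Integrable (fun x => Real.exp (t * x)) (gaussianReal 0 1) := by
  rw [gauss_eq, integrable_withDensity_iff_integrable_smul
    (measurable_gaussianPDFReal 0 1).real_toNNReal]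
  have : (fun x => (gaussianPDFReal 0 1 x).toNNReal • Real.exp (t * x))
      = fun x => Real.exp (t ^ 2 / 2) * gaussianPDFReal t 1 x := by
    funext x
    rw [NNReal.smul_def, Real.coe_toNNReal _ (gaussianPDFReal_nonneg 0 1 x), smul_eq_mul,
      pdf_mul_exp]
  rw [this]
  exact (integrable_gaussianPDFReal t 1).const_mul _

lemma integral_exp_gaussian (t : ℝ) :
    ∫ x, Real.exp (t * x) ∂(gaussianReal 0 1) = Real.exp (t ^ 2 / 2) := by
  rw [gauss_eq, integral_withDensity_eq_integral_smul
    (measurable_gaussianPDFReal 0 1).real_toNNReal]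
  have : (fun x => (gaussianPDFReal 0 1 x).toNNReal • Real.exp (t * x))
      = fun x => Real.exp (t ^ 2 / 2) * gaussianPDFReal t 1 x := by
    funext x
    rw [NNReal.smul_def, Real.coe_toNNReal _ (gaussianPDFReal_nonneg 0 1 x), smul_eq_mul,
      pdf_mul_exp]
  rw [this, integral_const_mul, integral_gaussianPDFReal_eq_one t one_ne_zero, mul_one]

lemma pi_map_eval (n : ℕ) (i : Fin n) :
    (Measure.pi fun _ : Fin n => gaussianReal 0 1).map (fun c => c i) = gaussianReal 0 1 := by
  ext s hs
  rw [Measure.map_apply (measurable_pi_apply i) hs, Set.eval_preimage, Measure.pi_pi]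
  rw [Finset.prod_eq_single i (fun b _ hb => by simp [Function.update_of_ne hb])
    (fun h => absurd (Finset.mem_univ i) h)]
  simp

lemma pi_eval_preimage (n : ℕ) (i : Fin n) {s : Set ℝ} (hs : MeasurableSet s) :
    (Measure.pi fun _ : Fin n => gaussianReal 0 1) ((fun c => c i) ⁻¹' s)
      = gaussianReal 0 1 s := by
  rw [← Measure.map_apply (measurable_pi_apply i) hs, pi_map_eval]

lemma indep_eval (n : ℕ) :
    iIndepFun (fun (i : Fin n) (c : Fin n → ℝ) => c i)
      (Measure.pi fun _ : Fin n => gaussianReal 0 1) := by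
  rw [iIndepFun_iff_measure_inter_preimage_eq_mul]
  intro S sets hsets
  have hset : (⋂ i ∈ S, (fun c : Fin n → ℝ => c i) ⁻¹' sets i)
      = Set.pi Set.univ (fun j => if j ∈ S then sets j else Set.univ) := by
    ext c
    simp only [Set.mem_iInter, Set.mem_preimage, Set.mem_pi, Set.mem_univ, true_implies]
    constructor
    · intro h j
      by_cases hj : j ∈ S <;> simp [hj, h]
    · intro h j hj
      have := h j
      rwa [if_pos hj] at this
  rw [hset, Measure.pi_pi]
  have : ∀ j : Fin n, gaussianReal 0 1 (if j ∈ S then sets j else Set.univ)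
      = if j ∈ S then gaussianReal 0 1 (sets j) else 1 := by
    intro j; by_cases hj : j ∈ S <;> simp [hj]
  simp_rw [this, Finset.prod_ite_mem, Finset.univ_inter]
  exact Finset.prod_congr rfl fun j hj => (pi_eval_preimage n j (hsets j hj)).symm

lemma mgf_eval (n : ℕ) (i : Fin n) (t : ℝ) :
    mgf (fun c : Fin n → ℝ => c i) (Measure.pi fun _ : Fin n => gaussianReal 0 1) t
      = Real.exp (t ^ 2 / 2) := by
  have h := integral_map (μ := Measure.pi fun _ : Fin n => gaussianReal 0 1)
    (φ := fun c : Fin n → ℝ => c i) (measurable_pi_apply i).aemeasurable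
    (f := fun y => Real.exp (t * y))
    (measurable_exp.comp (measurable_const_mul t)).aestronglyMeasurable
  rw [pi_map_eval, integral_exp_gaussian] at h
  rw [mgf]
  exact h.symm

lemma integrable_exp_eval (n : ℕ) (i : Fin n) (t : ℝ) :
    Integrable (fun c : Fin n → ℝ => Real.exp (t * c i))
      (Measure.pi fun _ : Fin n => gaussianReal 0 1) := by
  apply (integrable_map_measure
    (measurable_exp.comp (measurable_const_mul t)).aestronglyMeasurable
    (measurable_pi_apply i).aemeasurable).mp
  rw [pi_map_eval]
  exact integrable_exp_gaussian t

lemma chernoff (n : ℕ) (S : Finset (Fin n)) (a t : ℝ) (ht : 0 ≤ t) :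
    (Measure.pi fun _ : Fin n => gaussianReal 0 1) {c | a ≤ ∑ i ∈ S, c i}
      ≤ ENNReal.ofReal (Real.exp (-t * a) * Real.exp ((S.card : ℝ) * (t ^ 2 / 2))) := by
  set μn := Measure.pi fun _ : Fin n => gaussianReal 0 1 with hμn
  have hmeas : ∀ i : Fin n, Measurable (fun c : Fin n → ℝ => c i) :=
    fun i => measurable_pi_apply i
  have hint : ∀ i ∈ S, Integrable (fun c : Fin n → ℝ => Real.exp (t * c i)) μn :=
    fun i _ => integrable_exp_eval n i t
  have h_int : Integrable (fun c => Real.exp (t * (∑ i ∈ S, fun c : Fin n → ℝ => c i) c)) μn :=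
    (indep_eval n).integrable_exp_mul_sum hmeas hint
  have key := measure_ge_le_exp_mul_mgf (μ := μn)
    (X := ∑ i ∈ S, fun c : Fin n → ℝ => c i) a ht h_int
  have hmgf : mgf (∑ i ∈ S, fun c : Fin n → ℝ => c i) μn t
      = Real.exp ((S.card : ℝ) * (t ^ 2 / 2)) := by
    rw [(indep_eval n).mgf_sum hmeas S]
    simp_rw [mgf_eval]
    rw [Finset.prod_const, ← Real.exp_nat_mul]
  rw [hmgf] at key
  have hsets : {c : Fin n → ℝ | a ≤ ∑ i ∈ S, c i}
      = {c : Fin n → ℝ | a ≤ (∑ i ∈ S, fun c : Fin n → ℝ => c i) c} := by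
    ext c; simp [Finset.sum_apply]
  rw [hsets]
  exact (ENNReal.le_ofReal_iff_toReal_le (measure_ne_top _ _) (by positivity)).mpr key

lemma count_bound (n : ℕ) (β : ℝ) (hβl : 1 / 2 ≤ β) (hβu : β < 1) :
    ((Finset.univ.powerset.filter
        fun S : Finset (Fin n) => β * n ≤ (S.card : ℝ)).card : ℝ)
      ≤ Real.exp ((n : ℝ) * (-β * Real.log β - (1 - β) * Real.log (1 - β))) := by
  classical
  set H : ℝ := -β * Real.log β - (1 - β) * Real.log (1 - β) with hH
  have h0β : (0 : ℝ) < β := by linarith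
  have h01β : (0 : ℝ) < 1 - β := by linarith
  set 𝒮 := Finset.univ.powerset.filter fun S : Finset (Fin n) => β * n ≤ (S.card : ℝ) with h𝒮
  have hw : ∀ S ∈ 𝒮, Real.exp (-((n : ℝ) * H)) ≤ β ^ S.card * (1 - β) ^ (n - S.card) := by
    intro S hS
    have hk : β * n ≤ (S.card : ℝ) := (Finset.mem_filter.1 hS).2
    have hkn : S.card ≤ n := by
      simpa using Finset.card_le_univ S
    have e1 : β ^ S.card * (1 - β) ^ (n - S.card)
        = Real.exp ((S.card : ℝ) * Real.log β + ((n : ℝ) - S.card) * Real.log (1 - β)) := by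
      have b1 : β ^ S.card = Real.exp ((S.card : ℝ) * Real.log β) := by
        rw [Real.exp_nat_mul, Real.exp_log h0β]
      have b2 : (1 - β) ^ (n - S.card)
          = Real.exp (((n - S.card : ℕ) : ℝ) * Real.log (1 - β)) := by
        rw [Real.exp_nat_mul, Real.exp_log h01β]
      rw [b1, b2, ← Real.exp_add]
      congr 1
      push_cast [Nat.cast_sub hkn]
      ring_nf
    rw [e1]
    apply Real.exp_le_exp.2
    have hlog : Real.log (1 - β) ≤ Real.log β :=
      Real.log_le_log h01β (by linarith)
    have h1 : 0 ≤ ((S.card : ℝ) - β * n) * (Real.log β - Real.log (1 - β)) :=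
      mul_nonneg (by linarith) (by linarith)
    rw [hH]
    nlinarith [h1]
  have hsum : ∑ S ∈ (Finset.univ.powerset : Finset (Finset (Fin n))),
      β ^ S.card * (1 - β) ^ (n - S.card) = 1 := by
    have hpa := Finset.prod_add (fun _ : Fin n => β) (fun _ : Fin n => 1 - β) Finset.univ
    simp only [Finset.prod_const] at hpa
    rw [show β + (1 - β) = 1 by ring, one_pow] at hpa
    refine Eq.trans (Finset.sum_congr rfl fun S _ => ?_) hpa.symm
    rw [Finset.card_sdiff_of_subset (Finset.subset_univ S), Finset.card_univ, Fintype.card_fin]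
  have hstep : (𝒮.card : ℝ) * Real.exp (-((n : ℝ) * H)) ≤ 1 := by
    calc (𝒮.card : ℝ) * Real.exp (-((n : ℝ) * H))
        = ∑ _S ∈ 𝒮, Real.exp (-((n : ℝ) * H)) := by
          rw [Finset.sum_const, nsmul_eq_mul]
      _ ≤ ∑ S ∈ 𝒮, β ^ S.card * (1 - β) ^ (n - S.card) := Finset.sum_le_sum hw
      _ ≤ ∑ S ∈ (Finset.univ.powerset : Finset (Finset (Fin n))), β ^ S.card * (1 - β) ^ (n - S.card) := by
          apply Finset.sum_le_sum_of_subset_of_nonneg (Finset.filter_subset _ _)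
          intro S _ _
          positivity
      _ = 1 := hsum
  have hexp : (0 : ℝ) < Real.exp (-((n : ℝ) * H)) := Real.exp_pos _
  have h2 : (𝒮.card : ℝ) ≤ 1 / Real.exp (-((n : ℝ) * H)) := by
    rw [le_div_iff₀ hexp]; exact hstep
  rwa [one_div, ← Real.exp_neg, neg_neg] at h2

theorem stmt_10 (n : ℕ) (α β : ℝ)
    (hα : α ∈ Set.Icc (0 : ℝ) (2 * Real.sqrt (Real.log 2)))
    (hβ : β ∈ Set.Icc (1 / 2 : ℝ) 1)
    (hH : -β * Real.log β - (1 - β) * Real.log (1 - β) = α ^ 2 / 4) :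
    (Measure.pi fun _ : Fin n => gaussianReal 0 1)
      {c | ∃ x : Fin n → ℝ, (∀ i, x i = 0 ∨ x i = 1) ∧ β * n ≤ ∑ i, x i ∧
        α * n ≤ ∑ i, c i * x i}
      ≤ ENNReal.ofReal (Real.exp (-α ^ 2 * n / 4)) := by
  classical
  obtain ⟨hα0, -⟩ := hα
  obtain ⟨hβl, hβu⟩ := hβ
  set μn := Measure.pi fun _ : Fin n => gaussianReal 0 1 with hμn
  haveI : IsProbabilityMeasure μn := by rw [hμn]; infer_instance
  by_cases hn : n = 0
  · subst hn
    have h0 : -α ^ 2 * ((0 : ℕ) : ℝ) / 4 = 0 := by norm_num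
    rw [h0, Real.exp_zero, ENNReal.ofReal_one]
    exact prob_le_one
  by_cases hα' : α = 0
  · subst hα'
    have h0 : -(0 : ℝ) ^ 2 * (n : ℝ) / 4 = 0 := by norm_num
    rw [h0, Real.exp_zero, ENNReal.ofReal_one]
    exact prob_le_one
  have hnpos : (1 : ℝ) ≤ (n : ℝ) := by exact_mod_cast Nat.one_le_iff_ne_zero.2 hn
  have hαpos : 0 < α := lt_of_le_of_ne hα0 (Ne.symm hα')
  have hβu' : β < 1 := by
    rcases eq_or_lt_of_le hβu with h | h
    · exfalso
      rw [h] at hH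
      simp only [Real.log_one, mul_zero, sub_self, zero_mul, neg_mul, neg_zero, sub_zero] at hH
      nlinarith
    · exact h
  set 𝒮 := Finset.univ.powerset.filter
    (fun S : Finset (Fin n) => β * n ≤ (S.card : ℝ)) with h𝒮
  -- Step 1: the event is included in a union over large subsets
  have hsub : {c : Fin n → ℝ | ∃ x : Fin n → ℝ, (∀ i, x i = 0 ∨ x i = 1) ∧
        β * n ≤ ∑ i, x i ∧ α * n ≤ ∑ i, c i * x i}
      ⊆ ⋃ S ∈ 𝒮, {c : Fin n → ℝ | α * n ≤ ∑ i ∈ S, c i} := by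
    intro c hc
    obtain ⟨x, hx01, hxβ, hxα⟩ := hc
    set S := Finset.univ.filter (fun i => x i = 1) with hSdef
    have hsum1 : ∑ i, x i = (S.card : ℝ) := by
      have hx : ∀ i, x i = if x i = 1 then (1 : ℝ) else 0 := fun i => by
        rcases hx01 i with h | h <;> simp [h]
      rw [Finset.sum_congr rfl fun i _ => hx i]
      simp [hSdef]
    have hsum2 : ∑ i, c i * x i = ∑ i ∈ S, c i := by
      rw [← Finset.sum_filter_add_sum_filter_not Finset.univ (fun i => x i = 1)
        (fun i => c i * x i)]
      have h1 : ∑ i ∈ Finset.univ.filter (fun i => x i = 1), c i * x i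
          = ∑ i ∈ S, c i :=
        Finset.sum_congr rfl fun i hi => by rw [(Finset.mem_filter.1 hi).2, mul_one]
      have h2 : ∑ i ∈ Finset.univ.filter (fun i => ¬ x i = 1), c i * x i = 0 :=
        Finset.sum_eq_zero fun i hi => by
          rcases hx01 i with h | h
          · rw [h, mul_zero]
          · exact absurd h (Finset.mem_filter.1 hi).2
      rw [h1, h2, add_zero]
    have hS𝒮 : S ∈ 𝒮 :=
      Finset.mem_filter.2 ⟨Finset.mem_powerset.2 (Finset.subset_univ S),
        by rw [← hsum1]; exact hxβ⟩
    exact Set.mem_biUnion hS𝒮 (by rw [Set.mem_setOf_eq, ← hsum2]; exact hxα)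
  -- Step 2: bound for each subset
  have hUB : ∀ S ∈ 𝒮, μn {c : Fin n → ℝ | α * n ≤ ∑ i ∈ S, c i}
      ≤ ENNReal.ofReal (Real.exp (-(α ^ 2 * n) / 2)) := by
    intro S hS
    have hcard : β * n ≤ (S.card : ℝ) := (Finset.mem_filter.1 hS).2
    have hkpos : (0 : ℝ) < (S.card : ℝ) := lt_of_lt_of_le (by nlinarith) hcard
    have hkn : (S.card : ℝ) ≤ (n : ℝ) := by
      exact_mod_cast (by simpa using Finset.card_le_univ S : S.card ≤ n)
    set t := α * n / (S.card : ℝ) with ht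
    have ht0 : 0 ≤ t := by positivity
    refine (chernoff n S (α * n) t ht0).trans (ENNReal.ofReal_le_ofReal ?_)
    rw [← Real.exp_add]
    apply Real.exp_le_exp.2
    have e1 : -t * (α * n) + (S.card : ℝ) * (t ^ 2 / 2)
        = -((α * n) ^ 2 / (2 * (S.card : ℝ))) := by
      rw [ht]; field_simp; ring_nf
    rw [e1, neg_div]
    apply neg_le_neg
    rw [div_le_div_iff₀ (by norm_num) (by positivity)]
    nlinarith [sq_nonneg α, mul_le_mul_of_nonneg_left hkn (mul_nonneg (sq_nonneg α) (le_trans zero_le_one hnpos))]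
  -- Step 3: combine
  calc μn {c : Fin n → ℝ | ∃ x : Fin n → ℝ, (∀ i, x i = 0 ∨ x i = 1) ∧
        β * n ≤ ∑ i, x i ∧ α * n ≤ ∑ i, c i * x i}
      ≤ μn (⋃ S ∈ 𝒮, {c : Fin n → ℝ | α * n ≤ ∑ i ∈ S, c i}) := measure_mono hsub
    _ ≤ ∑ S ∈ 𝒮, μn {c : Fin n → ℝ | α * n ≤ ∑ i ∈ S, c i} :=
        measure_biUnion_finset_le _ _
    _ ≤ ∑ S ∈ 𝒮, ENNReal.ofReal (Real.exp (-(α ^ 2 * n) / 2)) := Finset.sum_le_sum hUB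
    _ = (𝒮.card : ENNReal) * ENNReal.ofReal (Real.exp (-(α ^ 2 * n) / 2)) := by
        rw [Finset.sum_const, nsmul_eq_mul]
    _ ≤ ENNReal.ofReal (Real.exp ((n : ℝ) * (α ^ 2 / 4)))
          * ENNReal.ofReal (Real.exp (-(α ^ 2 * n) / 2)) := by
        apply mul_le_mul_left
        rw [← ENNReal.ofReal_natCast]
        apply ENNReal.ofReal_le_ofReal
        have := count_bound n β hβl hβu'
        rwa [hH] at this
    _ = ENNReal.ofReal (Real.exp (-α ^ 2 * n / 4)) := by
        rw [← ENNReal.ofReal_mul (Real.exp_nonneg _), ← Real.exp_add]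
        congr 1
        ring_nf
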